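/- arXiv:math/0606080 — 8 statements merged into one kernel-verified Lean document; each statement's English description precedes it below -/
import Mathlib

section
/- For every positive integer n, the sum over k from 0 to 2n of C(2n,k)·|n−k| equals n·C(2n,n). -/
theorem stmt_0 (n : ℕ) (hn : 0 < n) :
    ∑ k ∈ Finset.range (2 * n + 1), (Nat.choose (2 * n) k : ℤ) * |(n : ℤ) - k| =
      n * Nat.choose (2 * n) n := by
  set A : ℤ := ∑ k ∈ Finset.range n, (Nat.choose (2 * n) k : ℤ) * ((n : ℤ) - k) with hA
  -- telescoping identity
  have htel : 2 * A = n * Nat.choose (2 * n) n := by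
    have : A * 2 = ∑ k ∈ Finset.range n,
        ((((k:ℤ)+1) * Nat.choose (2 * n) (k+1)) - (k : ℤ) * Nat.choose (2 * n) k) := by
      rw [hA, Finset.sum_mul]
      apply Finset.sum_congr rfl
      intro k hk
      have hk' : k < n := Finset.mem_range.mp hk
      have h := Nat.choose_succ_right_eq (2 * n) k
      have hk2 : k ≤ 2 * n := by omega
      have hcast : ((2 * n - k : ℕ) : ℤ) = 2 * (n:ℤ) - k := by
        push_cast [Nat.sub_add_cancel, Nat.cast_sub hk2]; ring
      have h' : ((k:ℤ)+1) * Nat.choose (2 * n) (k+1)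
          = (Nat.choose (2 * n) k : ℤ) * (2 * (n:ℤ) - k) := by
        have := congrArg (Nat.cast : ℕ → ℤ) h
        push_cast at this
        rw [hcast] at this
        linear_combination this
      rw [h']
      ring
    have ht2 : ∑ k ∈ Finset.range n,
        ((((k+1 : ℕ)) : ℤ) * Nat.choose (2 * n) (k+1) - (k : ℤ) * Nat.choose (2 * n) k)
        = (n : ℤ) * Nat.choose (2 * n) n := by
      rw [Finset.sum_range_sub (fun k => (k : ℤ) * Nat.choose (2 * n) k)]
      simp
    push_cast at ht2
    rw [ht2] at this
    linarith
  -- split the sum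
  have hsplit : ∑ k ∈ Finset.range (2 * n + 1), (Nat.choose (2 * n) k : ℤ) * |(n : ℤ) - k|
      = (∑ k ∈ Finset.range (n+1), (Nat.choose (2 * n) k : ℤ) * |(n : ℤ) - k|)
      + ∑ k ∈ Finset.Ico (n+1) (2*n+1), (Nat.choose (2 * n) k : ℤ) * |(n : ℤ) - k| := by
    rw [Finset.range_eq_Ico, ← Finset.sum_Ico_consecutive _ (by omega : 0 ≤ n+1)
      (by omega : n+1 ≤ 2*n+1)]
    rw [Finset.range_eq_Ico]
  have h1 : ∑ k ∈ Finset.range (n+1), (Nat.choose (2 * n) k : ℤ) * |(n : ℤ) - k| = A := by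
    rw [Finset.sum_range_succ]
    simp only [sub_self, abs_zero, mul_zero, add_zero]
    apply Finset.sum_congr rfl
    intro k hk
    have hk' : k < n := Finset.mem_range.mp hk
    rw [abs_of_nonneg (by omega : (0:ℤ) ≤ (n:ℤ) - k)]
  have h2 : ∑ k ∈ Finset.Ico (n+1) (2*n+1), (Nat.choose (2 * n) k : ℤ) * |(n : ℤ) - k| = A := by
    rw [Finset.sum_Ico_eq_sum_range]
    have hn' : 2*n+1 - (n+1) = n := by omega
    rw [hn', hA, ← Finset.sum_range_reflect (fun k => (Nat.choose (2 * n) k : ℤ) * ((n : ℤ) - k)) n]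
    apply Finset.sum_congr rfl
    intro j hj
    have hj' : j < n := Finset.mem_range.mp hj
    have hsym : Nat.choose (2*n) (n+1+j) = Nat.choose (2*n) (n-1-j) := by
      rw [← Nat.choose_symm (by omega : n+1+j ≤ 2*n)]
      congr 1
      omega
    rw [hsym]
    have hcast : ((n - 1 - j : ℕ) : ℤ) = (n:ℤ) - 1 - j := by
      have : (n:ℤ) ≥ 1 + j := by omega
      omega
    rw [abs_of_nonpos (by omega : ((n:ℤ) - (n+1+j:ℕ)) ≤ 0)]
    push_cast [hcast]
    ring
  rw [hsplit, h1, h2]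
  linarith
end

section
/- For every positive integer n, the sum over k from 0 to 2n of C(2n,k)·|n−k|^3 equals n^2·C(2n,n). -/
-- key telescoping identity: (N+1 - 2(k+1)) C(N+1,k+1) = (N+1)(C(N,k+1) - C(N,k))
lemma genA (M k : ℕ) :
    ((M : ℤ) + 1 - 2 * (k + 1)) * Nat.choose (M + 1) (k + 1) =
      ((M : ℤ) + 1) * ((Nat.choose M (k + 1) : ℤ) - Nat.choose M k) := by
  have h1 : ((M : ℤ) + 1) * Nat.choose M k = Nat.choose (M + 1) (k + 1) * (k + 1) := by
    exact_mod_cast Nat.add_one_mul_choose_eq M k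
  have h2 : (Nat.choose (M + 1) (k + 1) : ℤ) = Nat.choose M k + Nat.choose M (k + 1) := by
    exact_mod_cast Nat.choose_succ_succ M k
  linear_combination 2 * h1 + ((M : ℤ) + 1) * h2

-- closed form for partial sums of C(2p+2,k) * (p+1-k)^3
lemma Lp (p : ℕ) : ∀ m : ℕ,
    ∑ k ∈ Finset.range (m + 2), (Nat.choose (2 * p + 2) k : ℤ) * ((p : ℤ) + 1 - k) ^ 3 =
      ((p : ℤ) + 1) * ((p : ℤ) - m) ^ 2 * Nat.choose (2 * p + 1) (m + 1) +
        ((p : ℤ) + 1) * (2 * (p : ℤ) + 1) * Nat.choose (2 * p) m := by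
  intro m
  induction m with
  | zero =>
      simp [Finset.sum_range_succ]
      ring
  | succ m ih =>
      rw [Finset.sum_range_succ, ih]
      have hA : ((p : ℤ) - m - 1) * Nat.choose (2 * p + 2) (m + 2) =
          ((p : ℤ) + 1) * ((Nat.choose (2 * p + 1) (m + 2) : ℤ) - Nat.choose (2 * p + 1) (m + 1)) := by
        apply mul_left_cancel₀ (two_ne_zero (α := ℤ))
        have h := genA (2 * p + 1) (m + 1)
        push_cast at h ⊢
        linear_combination h
      have hB : (2 * (p : ℤ) - 2 * m - 1) * Nat.choose (2 * p + 1) (m + 1) =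
          (2 * (p : ℤ) + 1) * ((Nat.choose (2 * p) (m + 1) : ℤ) - Nat.choose (2 * p) m) := by
        have h := genA (2 * p) m
        push_cast at h ⊢
        linear_combination h
      push_cast
      linear_combination ((p : ℤ) - m - 1) ^ 2 * hA + ((p : ℤ) + 1) * hB

theorem stmt_1 (n : ℕ) (hn : 0 < n) :
    ∑ k ∈ Finset.range (2 * n + 1), (Nat.choose (2 * n) k : ℤ) * |(n : ℤ) - k| ^ 3 =
      n ^ 2 * Nat.choose (2 * n) n := by
  obtain ⟨p, rfl⟩ : ∃ p, n = p + 1 := ⟨n - 1, by omega⟩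
  have h2n : 2 * (p + 1) = 2 * p + 2 := by ring
  rw [h2n]
  -- split range (2p+3) into [0, p+2) and [p+2, 2p+3)
  have hsplit :
      ∑ k ∈ Finset.range (2 * p + 2 + 1), (Nat.choose (2 * p + 2) k : ℤ) * |((p : ℕ) + 1 : ℤ) - k| ^ 3 =
        (∑ k ∈ Finset.range (p + 2), (Nat.choose (2 * p + 2) k : ℤ) * |((p : ℤ) + 1) - k| ^ 3) +
          ∑ k ∈ Finset.Ico (p + 2) (2 * p + 3), (Nat.choose (2 * p + 2) k : ℤ) * |((p : ℤ) + 1) - k| ^ 3 := by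
    rw [Finset.range_eq_Ico, ← Finset.sum_Ico_consecutive _ (Nat.zero_le (p + 2)) (by omega : p + 2 ≤ 2 * p + 2 + 1), ← Finset.range_eq_Ico]
  have habs1 :
      ∑ k ∈ Finset.range (p + 2), (Nat.choose (2 * p + 2) k : ℤ) * |((p : ℤ) + 1) - k| ^ 3 =
        ∑ k ∈ Finset.range (p + 2), (Nat.choose (2 * p + 2) k : ℤ) * (((p : ℤ) + 1) - k) ^ 3 := by
    refine Finset.sum_congr rfl fun k hk => ?_
    rw [Finset.mem_range] at hk
    rw [abs_of_nonneg (by omega)]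
  have habs2 :
      ∑ k ∈ Finset.Ico (p + 2) (2 * p + 3), (Nat.choose (2 * p + 2) k : ℤ) * |((p : ℤ) + 1) - k| ^ 3 =
        -∑ k ∈ Finset.Ico (p + 2) (2 * p + 3), (Nat.choose (2 * p + 2) k : ℤ) * (((p : ℤ) + 1) - k) ^ 3 := by
    rw [← Finset.sum_neg_distrib]
    refine Finset.sum_congr rfl fun k hk => ?_
    rw [Finset.mem_Ico] at hk
    rw [abs_of_nonpos (by omega)]
    ring
  have hS1 :
      ∑ k ∈ Finset.range (p + 2), (Nat.choose (2 * p + 2) k : ℤ) * (((p : ℤ) + 1) - k) ^ 3 =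
        ((p : ℤ) + 1) * (2 * (p : ℤ) + 1) * Nat.choose (2 * p) p := by
    have := Lp p p
    simpa using this
  have hT :
      ∑ k ∈ Finset.range (2 * p + 3), (Nat.choose (2 * p + 2) k : ℤ) * (((p : ℤ) + 1) - k) ^ 3 = 0 := by
    have := Lp p (2 * p + 1)
    have e1 : Nat.choose (2 * p + 1) (2 * p + 1 + 1) = 0 := Nat.choose_eq_zero_of_lt (by omega)
    have e2 : Nat.choose (2 * p) (2 * p + 1) = 0 := Nat.choose_eq_zero_of_lt (by omega)
    rw [show 2 * p + 1 + 2 = 2 * p + 3 from by omega, e1, e2] at this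
    rw [this]
    ring
  have hS2 :
      ∑ k ∈ Finset.Ico (p + 2) (2 * p + 3), (Nat.choose (2 * p + 2) k : ℤ) * (((p : ℤ) + 1) - k) ^ 3 =
        -(((p : ℤ) + 1) * (2 * (p : ℤ) + 1) * Nat.choose (2 * p) p) := by
    have hT' := hT
    rw [Finset.range_eq_Ico, ← Finset.sum_Ico_consecutive _ (Nat.zero_le (p + 2)) (by omega : p + 2 ≤ 2 * p + 3),
      ← Finset.range_eq_Ico, hS1] at hT'
    linarith
  push_cast
  rw [hsplit, habs1, habs2, hS1, hS2]
  -- final binomial arithmetic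
  have h1 : ((2 * p + 2 : ℕ) : ℤ) * Nat.choose (2 * p + 1) p = (Nat.choose (2 * p + 2) (p + 1) : ℤ) * (p + 1) := by
    exact_mod_cast Nat.add_one_mul_choose_eq (2 * p + 1) p
  have h2 : ((2 * p + 1 : ℕ) : ℤ) * Nat.choose (2 * p) p = (Nat.choose (2 * p + 1) (p + 1) : ℤ) * (p + 1) := by
    exact_mod_cast Nat.add_one_mul_choose_eq (2 * p) p
  have h3 : Nat.choose (2 * p + 1) (p + 1) = Nat.choose (2 * p + 1) p := by
    rw [← Nat.choose_symm (by omega : p ≤ 2 * p + 1)]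
    congr 1
    omega
  rw [h3] at h2
  push_cast at h1 h2 ⊢
  linear_combination 2 * ((p : ℤ) + 1) * h2 + ((p : ℤ) + 1) * h1
end

section
/- For all nonnegative integers r and all integers n ≥ 2, S_{r+2}(n) = n^2·S_r(n) − 2n(2n−1)·S_r(n−1). -/
open Finset

lemma choose_id_aux (n k : ℕ) (h1 : 1 ≤ n) :
    (k+1) * ((2*n-1-k) * Nat.choose (2*n) (k+1)) = 2*n * ((2*n-1) * Nat.choose (2*n-2) k) := by
  have h2 : 2*n = (2*n-1)+1 := by omega
  have h3 : 2*n-1 = (2*n-2)+1 := by omega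
  have e1 : (2*n) * Nat.choose (2*n-1) k = Nat.choose (2*n) (k+1) * (k+1) := by
    rw [h2]; exact Nat.add_one_mul_choose_eq (2*n-1) k
  have e2 : Nat.choose (2*n-1) (k+1) * (k+1) = Nat.choose (2*n-1) k * (2*n-1-k) :=
    Nat.choose_succ_right_eq (2*n-1) k
  have e3 : (2*n-1) * Nat.choose (2*n-2) k = Nat.choose (2*n-1) (k+1) * (k+1) := by
    rw [h3]; exact Nat.add_one_mul_choose_eq (2*n-2) k
  calc (k+1) * ((2*n-1-k) * Nat.choose (2*n) (k+1))
      = (Nat.choose (2*n) (k+1) * (k+1)) * (2*n-1-k) := by ring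
    _ = ((2*n) * Nat.choose (2*n-1) k) * (2*n-1-k) := by rw [e1]
    _ = 2*n * (Nat.choose (2*n-1) k * (2*n-1-k)) := by ring
    _ = 2*n * (Nat.choose (2*n-1) (k+1) * (k+1)) := by rw [e2]
    _ = 2*n * ((2*n-1) * Nat.choose (2*n-2) k) := by rw [e3]

lemma sumB (r n : ℕ) (hn : 2 ≤ n) :
    ∑ k ∈ range (2*n+1), ((k : ℤ) * (2*(n:ℤ) - k) * Nat.choose (2*n) k) * |(n:ℤ) - k| ^ r
      = 2*(n:ℤ)*(2*(n:ℤ)-1) * ∑ j ∈ range (2*(n-1)+1),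
          (Nat.choose (2*(n-1)) j : ℤ) * |((n:ℤ)-1) - j| ^ r := by
  have h2 : 2*(n-1)+1 = 2*n-1 := by omega
  have h4 : 2*n = (2*n-1)+1 := by omega
  rw [Finset.sum_range_succ]
  have hz : ((2*n : ℕ) : ℤ) * (2*(n:ℤ) - (2*n : ℕ)) * Nat.choose (2*n) (2*n) * |(n:ℤ) - (2*n:ℕ)| ^ r = 0 := by
    push_cast; ring
  rw [hz, add_zero, h4, Finset.sum_range_succ']
  simp only [Nat.cast_zero, zero_mul, add_zero]
  rw [h2, Finset.mul_sum]
  refine Finset.sum_congr rfl ?_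
  intro k hk
  have hk' : k ≤ 2*n - 2 := by
    have := Finset.mem_range.mp hk; omega
  have key := choose_id_aux n k (by omega)
  have hcast : ((k:ℤ)+1) * ((2*(n:ℤ)-1-k) * (Nat.choose (2*n) (k+1) : ℤ))
      = 2*(n:ℤ) * ((2*(n:ℤ)-1) * (Nat.choose (2*n-2) k : ℤ)) := by
    have h := congrArg (Nat.cast : ℕ → ℤ) key
    push_cast [Nat.cast_sub (show k ≤ 2*n-1 by omega),
      Nat.cast_sub (show 1 ≤ 2*n by omega)] at h
    linarith [h]
  have h22 : 2*(n-1) = 2*n-2 := by omega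
  rw [h22, ← h4]
  push_cast
  rw [show ((n:ℤ)-1) - k = (n:ℤ) - (k+1) by ring]
  linear_combination (|(n:ℤ) - ((k:ℤ)+1)| ^ r) * hcast

theorem stmt_3 (r : ℕ) (n : ℕ) (hn : 2 ≤ n) :
    ∑ k ∈ Finset.range (2 * n + 1), (Nat.choose (2 * n) k : ℤ) * |(n : ℤ) - k| ^ (r + 2) =
      (n : ℤ) ^ 2 *
          (∑ k ∈ Finset.range (2 * n + 1), (Nat.choose (2 * n) k : ℤ) * |(n : ℤ) - k| ^ r) -
        2 * n * (2 * n - 1) *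
          (∑ k ∈ Finset.range (2 * (n - 1) + 1),
            (Nat.choose (2 * (n - 1)) k : ℤ) * |((n : ℤ) - 1) - k| ^ r) := by
  have hA : ∀ k ∈ range (2*n+1),
      (Nat.choose (2*n) k : ℤ) * |(n : ℤ) - k| ^ (r + 2)
        = (n:ℤ)^2 * ((Nat.choose (2*n) k : ℤ) * |(n : ℤ) - k| ^ r)
          - ((k : ℤ) * (2*(n:ℤ) - k) * Nat.choose (2*n) k) * |(n:ℤ) - k| ^ r := by
    intro k hk
    have hx : ((n:ℤ)-k)^2 = (n:ℤ)^2 - k*(2*(n:ℤ)-k) := by ring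
    rw [pow_add, sq_abs, hx]
    ring
  rw [Finset.sum_congr rfl hA, Finset.sum_sub_distrib, ← Finset.mul_sum, sumB r n hn]
end

section
/- For every positive integer n, S_5(n) = (2n−1)·n^2·C(2n,n), i.e., Σ_{k=0}^{2n} C(2n,k)·|n−k|^5 = (2n−1)·n^2·C(2n,n). -/
/-- Gosper certificate polynomial for `S_5`. -/
def tP (n k : ℤ) : ℤ :=
  k ^ 4 + (-(4 * n) - 2) * k ^ 3 + (6 * n ^ 2 + 8 * n) * k ^ 2 +
    (-(4 * n ^ 3) - 10 * n ^ 2 - 2 * n + 1) * k + (n ^ 4 + 4 * n ^ 3 + 4 * n ^ 2 - 2 * n)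

/-- Telescoping antidifference. -/
def tG (n k : ℕ) : ℤ := (k : ℤ) * tP n k * (Nat.choose (2 * n) k : ℤ)

theorem tG_step (n k : ℕ) (hk : k < n) :
    tG n (k + 1) - tG n k = 2 * ((n : ℤ) - k) ^ 5 * (Nat.choose (2 * n) k : ℤ) := by
  have hk2 : k ≤ 2 * n := by omega
  have h1 := Nat.choose_succ_right_eq (2 * n) k
  have h1' : (Nat.choose (2 * n) (k + 1) : ℤ) * ((k : ℤ) + 1) =
      (Nat.choose (2 * n) k : ℤ) * (2 * (n : ℤ) - k) := by
    zify [hk2] at h1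
    linarith [h1]
  have hpoly : tP n ((k : ℤ) + 1) * (2 * (n : ℤ) - k) - (k : ℤ) * tP n k =
      2 * ((n : ℤ) - k) ^ 5 := by
    simp only [tP]; ring
  simp only [tG, tP] at *
  push_cast
  linear_combination (((k : ℤ) + 1) ^ 4 + (-(4 * (n : ℤ)) - 2) * ((k : ℤ) + 1) ^ 3 +
      (6 * (n : ℤ) ^ 2 + 8 * n) * ((k : ℤ) + 1) ^ 2 +
      (-(4 * (n : ℤ) ^ 3) - 10 * (n : ℤ) ^ 2 - 2 * n + 1) * ((k : ℤ) + 1) +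
      ((n : ℤ) ^ 4 + 4 * (n : ℤ) ^ 3 + 4 * (n : ℤ) ^ 2 - 2 * n)) * h1' +
    (Nat.choose (2 * n) k : ℤ) * hpoly

theorem stmt_7 (n : ℕ) (hn : 0 < n) :
    ∑ k ∈ Finset.range (2 * n + 1), (Nat.choose (2 * n) k : ℤ) * |(n : ℤ) - k| ^ 5 =
      (2 * n - 1) * n ^ 2 * Nat.choose (2 * n) n := by
  set f : ℕ → ℤ := fun k => (Nat.choose (2 * n) k : ℤ) * |(n : ℤ) - k| ^ 5 with hf
  -- split the sum
  have hsplit : ∑ k ∈ Finset.range (2 * n + 1), f k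
      = (∑ k ∈ Finset.range (n + 1), f k) + ∑ j ∈ Finset.range n, f (n + 1 + j) := by
    rw [show 2 * n + 1 = (n + 1) + n by ring, Finset.sum_range_add]
  -- reflect the upper half
  have hrefl : ∑ j ∈ Finset.range n, f (n + 1 + j) = ∑ j ∈ Finset.range n, f j := by
    rw [← Finset.sum_range_reflect (fun j => f (n + 1 + j)) n]
    apply Finset.sum_congr rfl
    intro j hj
    rw [Finset.mem_range] at hj
    have h1 : n + 1 + (n - 1 - j) = 2 * n - j := by omega
    rw [h1]
    have hj2 : j ≤ 2 * n := by omega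
    simp only [hf]
    rw [Nat.choose_symm hj2]
    congr 1
    have : ((2 * n - j : ℕ) : ℤ) = 2 * (n : ℤ) - j := by
      zify [hj2]
    rw [this]
    rw [show (n : ℤ) - (2 * (n : ℤ) - j) = -((n : ℤ) - j) by ring, abs_neg]
  have hfn : f n = 0 := by simp [hf]
  -- first half equals telescoping sum
  have hhalf : 2 * ∑ k ∈ Finset.range n, f k
      = ∑ k ∈ Finset.range n, (tG n (k + 1) - tG n k) := by
    rw [Finset.mul_sum]
    apply Finset.sum_congr rfl
    intro k hk
    rw [Finset.mem_range] at hk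
    rw [tG_step n k hk]
    simp only [hf]
    have habs : |(n : ℤ) - k| = (n : ℤ) - k := by
      rw [abs_of_nonneg]
      have : (k : ℤ) < n := by exact_mod_cast hk
      linarith
    rw [habs]; ring
  have htel : ∑ k ∈ Finset.range n, (tG n (k + 1) - tG n k) = tG n n - tG n 0 :=
    Finset.sum_range_sub (tG n) n
  have hGn : tG n n - tG n 0 = (2 * (n : ℤ) - 1) * (n : ℤ) ^ 2 * (Nat.choose (2 * n) n : ℤ) := by
    simp only [tG, tP]
    push_cast
    ring
  rw [hsplit, hrefl, Finset.sum_range_succ, hfn]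
  have : (∑ k ∈ Finset.range n, f k) + 0 + ∑ k ∈ Finset.range n, f k
      = 2 * ∑ k ∈ Finset.range n, f k := by ring
  rw [this, hhalf, htel, hGn]
end

section
/- For every positive integer n, S_7(n) = (6n^2−8n+3)·n^2·C(2n,n). -/
def Qpoly (n j : ℤ) : ℤ :=
  (n^6 + 6*n^5 + 12*n^4 + 2*n^3 - 16*n^2 + 6*n) * j
  + (-6*n^5 - 27*n^4 - 30*n^3 + 19*n^2 + 8*n - 3) * j^2
  + (15*n^4 + 48*n^3 + 24*n^2 - 20*n) * j^3
  + (-20*n^3 - 42*n^2 - 6*n + 5) * j^4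
  + (15*n^2 + 18*n) * j^5
  + (-6*n - 3) * j^6
  + j^7

theorem stmt_8 (n : ℕ) (hn : 0 < n) :
    ∑ k ∈ Finset.range (2 * n + 1), (Nat.choose (2 * n) k : ℤ) * |(n : ℤ) - k| ^ 7 =
      (6 * n ^ 2 - 8 * n + 3) * n ^ 2 * Nat.choose (2 * n) n := by
  set f : ℕ → ℤ := fun j => (Nat.choose (2 * n) j : ℤ) * |(n : ℤ) - j| ^ 7 with hf
  set G : ℕ → ℤ := fun j => (Nat.choose (2 * n) j : ℤ) * Qpoly (n : ℤ) (j : ℤ) with hG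
  have poly : ∀ x y : ℤ, (2*x - y) * Qpoly x (y+1) - (y+1) * Qpoly x y = 2*(y+1)*(x-y)^7 := by
    intro x y; simp only [Qpoly]; ring
  have qval : ∀ x : ℤ, Qpoly x (x+1) * x = (x+1) * ((6*x^2 - 8*x + 3) * x^2) := by
    intro x; simp only [Qpoly]; ring
  -- step 1: split and reflect
  have hsplit : ∑ k ∈ Finset.range (2 * n + 1), f k
      = ∑ k ∈ Finset.range (n + 1), f k + ∑ k ∈ Finset.Ico (n + 1) (2 * n + 1), f k := by
    rw [Finset.range_eq_Ico, ← Finset.sum_Ico_consecutive f (by omega : 0 ≤ n + 1) (by omega : n + 1 ≤ 2 * n + 1), Finset.range_eq_Ico]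
  have hrefl : ∑ k ∈ Finset.Ico (n + 1) (2 * n + 1), f k = ∑ k ∈ Finset.range n, f k := by
    have := Finset.sum_Ico_reflect f 0 (by omega : n ≤ 2 * n + 1)
    have h2 : 2 * n + 1 - n = n + 1 := by omega
    have h3 : 2 * n + 1 - 0 = 2 * n + 1 := by omega
    rw [h2, h3] at this
    rw [← this, Finset.range_eq_Ico]
    apply Finset.sum_congr rfl
    intro j hj
    simp only [Finset.mem_Ico] at hj
    have hj2 : j ≤ 2 * n := by omega
    simp only [hf]
    rw [Nat.choose_symm hj2, Nat.cast_sub hj2]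
    congr 1
    push_cast
    rw [abs_sub_comm]
    congr 1
    ring
  have hfn : f n = 0 := by simp [hf]
  have hLHS : ∑ k ∈ Finset.range (2 * n + 1), f k = ∑ j ∈ Finset.range (n + 1), 2 * f j := by
    have h4 : ∑ k ∈ Finset.range n, f k = ∑ k ∈ Finset.range (n + 1), f k - f n := by
      rw [Finset.sum_range_succ]; ring
    have h5 : ∑ j ∈ Finset.range (n + 1), 2 * f j = 2 * ∑ j ∈ Finset.range (n + 1), f j :=
      (Finset.mul_sum _ _ _).symm
    rw [hsplit, hrefl, h4, hfn, h5]; ring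
  -- step 2: telescoping identity
  have key : ∀ j ∈ Finset.range (n + 1), 2 * f j = G (j + 1) - G j := by
    intro j hj
    rw [Finset.mem_range] at hj
    have hjn : j ≤ n := by omega
    have hle : j ≤ 2 * n := by omega
    have h1 : (Nat.choose (2 * n) (j + 1) : ℤ) * ((j : ℤ) + 1)
        = (Nat.choose (2 * n) j : ℤ) * (2 * (n : ℤ) - j) := by
      have := congrArg (Nat.cast : ℕ → ℤ) (Nat.choose_succ_right_eq (2 * n) j)
      push_cast [Nat.cast_sub hle] at this
      linarith [this]
    have habs : |(n : ℤ) - j| = (n : ℤ) - j := by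
      apply abs_of_nonneg
      have : (j : ℤ) ≤ n := by exact_mod_cast hjn
      linarith
    have hne : ((j : ℤ) + 1) ≠ 0 := by positivity
    apply mul_left_cancel₀ hne
    simp only [hf, hG, habs]
    push_cast
    linear_combination (-Qpoly (n : ℤ) ((j : ℤ) + 1)) * h1
      - (Nat.choose (2 * n) j : ℤ) * poly (n : ℤ) (j : ℤ)
  have tele : ∑ j ∈ Finset.range (n + 1), (G (j + 1) - G j) = G (n + 1) - G 0 :=
    Finset.sum_range_sub G (n + 1)
  have hG0 : G 0 = 0 := by simp [hG, Qpoly]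
  -- step 3: evaluate G (n+1)
  have hfin : G (n + 1) = (6 * n ^ 2 - 8 * n + 3) * n ^ 2 * Nat.choose (2 * n) n := by
    have h1 : (Nat.choose (2 * n) (n + 1) : ℤ) * ((n : ℤ) + 1)
        = (Nat.choose (2 * n) n : ℤ) * (n : ℤ) := by
      have := congrArg (Nat.cast : ℕ → ℤ) (Nat.choose_succ_right_eq (2 * n) n)
      have h2 : 2 * n - n = n := by omega
      rw [h2] at this
      push_cast at this
      linarith [this]
    have hne : ((n : ℤ) + 1) ≠ 0 := by positivity
    apply mul_left_cancel₀ hne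
    simp only [hG]
    push_cast
    linear_combination Qpoly (n : ℤ) ((n : ℤ) + 1) * h1
      + (Nat.choose (2 * n) n : ℤ) * qval (n : ℤ)
  calc ∑ k ∈ Finset.range (2 * n + 1), f k
      = ∑ j ∈ Finset.range (n + 1), 2 * f j := hLHS
    _ = ∑ j ∈ Finset.range (n + 1), (G (j + 1) - G j) := Finset.sum_congr rfl key
    _ = G (n + 1) - G 0 := tele
    _ = (6 * n ^ 2 - 8 * n + 3) * n ^ 2 * Nat.choose (2 * n) n := by rw [hG0, hfin]; ring
end

section
/- For every positive integer n, S_6(n) = (15n^2−15n+4)·n·2^{2n−3}. -/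
noncomputable def gS (r m : ℕ) : ℚ :=
  ∑ k ∈ Finset.range (m + 1), (Nat.choose m k : ℚ) * ((2 * (k : ℚ)) - m) ^ r

lemma gS_succ (r m : ℕ) :
    gS r (m + 1) = ∑ k ∈ Finset.range (m + 1), (Nat.choose m k : ℚ) *
      (((2 * (k : ℚ)) - m - 1) ^ r + ((2 * (k : ℚ)) - m + 1) ^ r) := by
  set a : ℕ → ℚ := fun k => ((2 * (k : ℚ)) - (m + 1)) ^ r with ha
  have h1 : gS r (m + 1)
      = ∑ k ∈ Finset.range (m + 1), (Nat.choose (m + 1) (k + 1) : ℚ) * a (k + 1) + a 0 := by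
    unfold gS
    rw [Finset.sum_range_succ']
    simp [ha]
  have h2 : ∑ k ∈ Finset.range (m + 1), (Nat.choose m (k + 1) : ℚ) * a (k + 1)
      = ∑ k ∈ Finset.range (m + 1), (Nat.choose m k : ℚ) * a k - a 0 := by
    have h := Finset.sum_range_succ' (fun k => (Nat.choose m k : ℚ) * a k) (m + 1)
    rw [Finset.sum_range_succ] at h
    simp [Nat.choose_succ_self] at h
    linarith [h]
  have h3 : ∀ k ∈ Finset.range (m + 1), (Nat.choose (m + 1) (k + 1) : ℚ) * a (k + 1)
      = (Nat.choose m k : ℚ) * a (k + 1) + (Nat.choose m (k + 1) : ℚ) * a (k + 1) := by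
    intro k _
    rw [Nat.choose_succ_succ]; push_cast; ring
  rw [h1, Finset.sum_congr rfl h3, Finset.sum_add_distrib, h2]
  have h4 : ∀ k, a (k + 1) = ((2 * (k : ℚ)) - m + 1) ^ r := by
    intro k; simp only [ha]; push_cast; ring_nf
  have h5 : ∀ k, a k = ((2 * (k : ℚ)) - m - 1) ^ r := by
    intro k; simp only [ha]; push_cast; ring_nf
  have : ∑ k ∈ Finset.range (m + 1), (Nat.choose m k : ℚ) *
      (((2 * (k : ℚ)) - m - 1) ^ r + ((2 * (k : ℚ)) - m + 1) ^ r)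
      = ∑ k ∈ Finset.range (m + 1), ((Nat.choose m k : ℚ) * a (k + 1)
        + (Nat.choose m k : ℚ) * a k) := by
    refine Finset.sum_congr rfl fun k _ => ?_
    rw [h4, h5]; ring
  rw [this, Finset.sum_add_distrib]
  ring

lemma gS_closed (m : ℕ) :
    gS 0 m = 2 ^ m ∧ gS 2 m = m * 2 ^ m ∧ gS 4 m = (3 * m ^ 2 - 2 * m) * 2 ^ m ∧
      gS 6 m = (15 * (m : ℚ) ^ 3 - 30 * m ^ 2 + 16 * m) * 2 ^ m := by
  induction m with
  | zero => norm_num [gS]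
  | succ m ih =>
    obtain ⟨h0, h2, h4, h6⟩ := ih
    have e0 : gS 0 (m + 1) = 2 * gS 0 m := by
      rw [gS_succ]
      unfold gS
      rw [Finset.mul_sum]
      exact Finset.sum_congr rfl fun k _ => by ring
    have e2 : gS 2 (m + 1) = 2 * gS 2 m + 2 * gS 0 m := by
      rw [gS_succ]
      unfold gS
      rw [Finset.mul_sum, Finset.mul_sum, ← Finset.sum_add_distrib]
      exact Finset.sum_congr rfl fun k _ => by ring
    have e4 : gS 4 (m + 1) = 2 * gS 4 m + 12 * gS 2 m + 2 * gS 0 m := by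
      rw [gS_succ]
      unfold gS
      rw [Finset.mul_sum, Finset.mul_sum, Finset.mul_sum, ← Finset.sum_add_distrib,
        ← Finset.sum_add_distrib]
      exact Finset.sum_congr rfl fun k _ => by ring
    have e6 : gS 6 (m + 1) = 2 * gS 6 m + 30 * gS 4 m + 30 * gS 2 m + 2 * gS 0 m := by
      rw [gS_succ]
      unfold gS
      rw [Finset.mul_sum, Finset.mul_sum, Finset.mul_sum, Finset.mul_sum,
        ← Finset.sum_add_distrib, ← Finset.sum_add_distrib, ← Finset.sum_add_distrib]
      exact Finset.sum_congr rfl fun k _ => by ring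
    refine ⟨?_, ?_, ?_, ?_⟩
    · rw [e0, h0]; ring
    · rw [e2, h2, h0]; push_cast; ring
    · rw [e4, h4, h2, h0]; push_cast; ring
    · rw [e6, h6, h4, h2, h0]; push_cast; ring

theorem stmt_9 (n : ℕ) (hn : 0 < n) :
    ∑ k ∈ Finset.range (2 * n + 1), (Nat.choose (2 * n) k : ℚ) * |(n : ℚ) - k| ^ 6 =
      (15 * n ^ 2 - 15 * n + 4) * n * (2 : ℚ) ^ (2 * (n : ℤ) - 3) := by
  have h := (gS_closed (2 * n)).2.2.2
  have key : ∑ k ∈ Finset.range (2 * n + 1), (Nat.choose (2 * n) k : ℚ) * |(n : ℚ) - k| ^ 6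
      = gS 6 (2 * n) / 64 := by
    unfold gS
    rw [Finset.sum_div]
    refine Finset.sum_congr rfl fun k _ => ?_
    have habs : |(n : ℚ) - k| ^ 6 = ((n : ℚ) - k) ^ 6 := by
      rw [show (6 : ℕ) = 2 * 3 from rfl, pow_mul, sq_abs, ← pow_mul]
    rw [habs]
    push_cast
    ring
  rw [key, h]
  have h2 : (2 : ℚ) ^ (2 * (n : ℤ) - 3) = 2 ^ (2 * n) / 8 := by
    rw [zpow_sub₀ (by norm_num : (2 : ℚ) ≠ 0),
      show (2 * (n : ℤ)) = ((2 * n : ℕ) : ℤ) by push_cast; ring, zpow_natCast]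
    norm_num
  rw [h2]
  push_cast
  ring
end

section
/- For every positive integer n, S_9(n) = (24n^3−60n^2+54n−17)·n^2·C(2n,n). -/
private def qq (n i : ℤ) : ℤ :=
  i^9 + i^8*(-4-8*n) + i^7*(32*n+28*n^2)
  + i^6*(14-12*n-108*n^2-56*n^3)
  + i^5*(-84*n+72*n^2+200*n^3+70*n^4)
  + i^4*(-28+48*n+172*n^2-168*n^3-220*n^4-56*n^5)
  + i^3*(112*n-192*n^2-128*n^3+192*n^4+144*n^5+28*n^6)
  + i^2*(17-54*n-80*n^2+216*n^3+6*n^4-108*n^5-52*n^6-8*n^7)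
  + i*(-34*n+108*n^2-64*n^3-48*n^4+20*n^5+24*n^6+8*n^7+n^8)

private lemma qq_rec (n i : ℤ) :
    qq n (i+1) * (2*n - i) - qq n i * (i+1) = 2 * (n - i)^9 * (i+1) := by
  simp only [qq]; ring

private lemma step (n k : ℕ) (hk : k < n) :
    qq (n:ℤ) (k+1) * ((2*n).choose (k+1) : ℤ) - qq (n:ℤ) k * ((2*n).choose k : ℤ)
      = 2 * ((n:ℤ) - k)^9 * ((2*n).choose k : ℤ) := by
  have h1 : ((2*n).choose (k+1)) * (k+1) = (2*n).choose k * (2*n - k) :=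
    Nat.choose_succ_right_eq (2*n) k
  have hk2 : k ≤ 2*n := by omega
  have h2 : ((2*n).choose (k+1) : ℤ) * ((k:ℤ)+1) = ((2*n).choose k : ℤ) * (2*(n:ℤ) - k) := by
    have := congrArg (fun x : ℕ => (x : ℤ)) h1
    push_cast [Nat.cast_sub hk2] at this
    push_cast
    linarith [this]
  have hne : ((k:ℤ)+1) ≠ 0 := by positivity
  apply mul_left_cancel₀ hne
  have hrec := qq_rec (n:ℤ) (k:ℤ)
  calc ((k:ℤ)+1) * (qq (n:ℤ) (k+1) * ((2*n).choose (k+1) : ℤ)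
          - qq (n:ℤ) k * ((2*n).choose k : ℤ))
      = qq (n:ℤ) (k+1) * (((2*n).choose (k+1) : ℤ) * ((k:ℤ)+1))
          - qq (n:ℤ) k * ((k:ℤ)+1) * ((2*n).choose k : ℤ) := by ring
    _ = (qq (n:ℤ) (k+1) * (2*(n:ℤ) - k) - qq (n:ℤ) k * ((k:ℤ)+1)) * ((2*n).choose k : ℤ) := by
          rw [h2]; ring
    _ = (2 * ((n:ℤ) - k)^9 * ((k:ℤ)+1)) * ((2*n).choose k : ℤ) := by rw [hrec]
    _ = ((k:ℤ)+1) * (2 * ((n:ℤ) - k)^9 * ((2*n).choose k : ℤ)) := by ring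

theorem stmt_10 (n : ℕ) (hn : 0 < n) :
    ∑ k ∈ Finset.range (2 * n + 1), (Nat.choose (2 * n) k : ℤ) * |(n : ℤ) - k| ^ 9 =
      (24 * n ^ 3 - 60 * n ^ 2 + 54 * n - 17) * n ^ 2 * Nat.choose (2 * n) n := by
  set f : ℕ → ℤ := fun k => (Nat.choose (2 * n) k : ℤ) * |(n : ℤ) - k| ^ 9 with hf
  -- split the sum:  range (n + (n+1))
  have hsplit : ∑ k ∈ Finset.range (2 * n + 1), f k
      = ∑ k ∈ Finset.range n, f k + ∑ k ∈ Finset.range (n+1), f (n + k) := by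
    rw [show 2 * n + 1 = n + (n+1) by ring, Finset.sum_range_add]
  -- second part
  have hmid : f (n + 0) = 0 := by
    simp [hf]
  have hsecond : ∑ k ∈ Finset.range (n+1), f (n + k) = ∑ k ∈ Finset.range n, f k := by
    rw [Finset.sum_range_succ' (fun k => f (n + k))]
    rw [hmid, add_zero]
    rw [← Finset.sum_range_reflect f n]
    apply Finset.sum_congr rfl
    intro k hk
    rw [Finset.mem_range] at hk
    show f (n + (k+1)) = f (n - 1 - k)
    have h1 : n + (k+1) ≤ 2 * n := by omega
    have hsym : (2*n).choose (n + (k+1)) = (2*n).choose (n - 1 - k) := by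
      rw [← Nat.choose_symm h1]
      congr 1
      omega
    have hc1 : ((n - 1 - k : ℕ) : ℤ) = (n:ℤ) - 1 - k := by
      have : 1 + k ≤ n := by omega
      push_cast [Nat.cast_sub (by omega : 1 ≤ n), Nat.cast_sub (by omega : k ≤ n - 1)]
      omega
    simp only [hf, hsym, hc1]
    push_cast
    congr 1
    rw [show (n:ℤ) - ((n:ℤ) + ((k:ℤ)+1)) = -((k:ℤ)+1) by ring,
        show (n:ℤ) - ((n:ℤ) - 1 - (k:ℤ)) = (k:ℤ)+1 by ring, abs_neg]
  -- telescoping for the first part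
  have habs : ∀ k ∈ Finset.range n, f k = (Nat.choose (2*n) k : ℤ) * ((n:ℤ) - k)^9 := by
    intro k hk
    rw [Finset.mem_range] at hk
    simp only [hf]
    rw [abs_of_nonneg (by push_cast; omega : (0:ℤ) ≤ (n:ℤ) - k)]
  have htel : ∑ k ∈ Finset.range n,
      (qq (n:ℤ) (k+1) * ((2*n).choose (k+1) : ℤ) - qq (n:ℤ) k * ((2*n).choose k : ℤ))
      = qq (n:ℤ) n * ((2*n).choose n : ℤ) - qq (n:ℤ) 0 * ((2*n).choose 0 : ℤ) := by
    exact Finset.sum_range_sub (fun k => qq (n:ℤ) k * ((2*n).choose k : ℤ)) n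
  have hsum2 : 2 * ∑ k ∈ Finset.range n, f k
      = qq (n:ℤ) n * ((2*n).choose n : ℤ) := by
    have h0 : qq (n:ℤ) 0 = 0 := by simp [qq]
    rw [Finset.mul_sum]
    have hcong : ∑ k ∈ Finset.range n, 2 * f k
        = ∑ k ∈ Finset.range n,
          (qq (n:ℤ) (k+1) * ((2*n).choose (k+1) : ℤ) - qq (n:ℤ) k * ((2*n).choose k : ℤ)) := by
      apply Finset.sum_congr rfl
      intro k hk
      have hs := step n k (Finset.mem_range.mp hk)
      rw [habs k hk]
      linarith [hs]
    rw [hcong, htel, h0]; ring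
  have hqn : qq (n:ℤ) (n:ℤ) = (24 * (n:ℤ) ^ 3 - 60 * (n:ℤ) ^ 2 + 54 * (n:ℤ) - 17) * (n:ℤ) ^ 2 := by
    simp only [qq]; ring
  rw [hsplit, hsecond]
  push_cast
  push_cast at hsum2
  linarith [hsum2, hqn ▸ hsum2]
end

section
/- For every nonnegative integer r, there exists a polynomial P_r with integer coefficients, of degree r, such that for all positive integers n, Σ_{k=0}^{2n} C(2n,k)·|n−k|^{2r+1} = P_r(n)·n·C(2n,n). -/
open Finset Polynomial

/-- parity splitter -/
lemma parity_split {R : Type*} [CommRing R] (t : ℕ) (h : ℕ → R) :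
    ∑ j ∈ range (2*t+1), h j * (1 - (-1)^j) = 2 * ∑ i ∈ range t, h (2*i+1) := by
  induction t with
  | zero => simp
  | succ t ih =>
      have e1 : 2*(t+1)+1 = (2*t+1) + 1 + 1 := by ring
      rw [e1, Finset.sum_range_succ, Finset.sum_range_succ, ih, Finset.sum_range_succ]
      have hodd : ((-1 : R))^(2*t+1) = -1 := by
        rw [pow_succ, pow_mul]; simp
      have heven : ((-1 : R))^(2*t+1+1) = 1 := by
        rw [pow_succ, hodd]; ring
      rw [hodd, heven]
      ring

lemma neg_one_pow_sub {R : Type*} [CommRing R] {j n : ℕ} (h : j ≤ n) (hn : Even n) :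
    ((-1 : R))^(n - j) = (-1)^j := by
  have h2 : ((-1:R))^(n-j) * (-1)^j = (-1)^n := by rw [← pow_add]; congr 1; omega
  rcases Nat.even_or_odd j with hj | hj
  · have : Even (n - j) := by
      rcases hn with ⟨a, ha⟩; rcases hj with ⟨b, hb⟩; exact ⟨a - b, by omega⟩
    rw [hj.neg_one_pow, this.neg_one_pow]
  · have : Odd (n - j) := by
      rcases hn with ⟨a, ha⟩; rcases hj with ⟨b, hb⟩; exact ⟨a - b - 1, by omega⟩
    rw [hj.neg_one_pow, this.neg_one_pow]

/-- L3: odd expansion -/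
lemma odd_expand {R : Type*} [CommRing R] (t : ℕ) (z : R) :
    (z+1)^(2*t) - (z-1)^(2*t) = 2 * ∑ i ∈ range t, (Nat.choose (2*t) (2*i+1) : R) * z^(2*i+1) := by
  have h1 : (z+1)^(2*t) = ∑ j ∈ range (2*t+1), z^j * 1^(2*t-j) * (Nat.choose (2*t) j : R) :=
    add_pow z 1 (2*t)
  have h2 : (z-1)^(2*t) = ∑ j ∈ range (2*t+1), z^j * (-1)^(2*t-j) * (Nat.choose (2*t) j : R) := by
    have := add_pow z (-1) (2*t); rw [← this]; ring_nf
  rw [h1, h2, ← Finset.sum_sub_distrib]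
  have key : ∀ j ∈ range (2*t+1),
      z^j * 1^(2*t-j) * (Nat.choose (2*t) j : R) - z^j * (-1)^(2*t-j) * (Nat.choose (2*t) j : R)
      = (z^j * (Nat.choose (2*t) j : R)) * (1 - (-1)^j) := by
    intro j hj
    rw [Finset.mem_range] at hj
    rw [neg_one_pow_sub (by omega) ⟨t, by ring⟩]
    ring
  rw [Finset.sum_congr rfl key, parity_split]
  congr 1
  apply Finset.sum_congr rfl
  intro i _
  ring


/-- L4 -/
lemma sum_odd_choose (t : ℕ) (ht : 1 ≤ t) :
    ∑ i ∈ range t, (Nat.choose (2*t) (2*i+1) : ℤ) = 2^(2*t-1) := by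
  have h := odd_expand (R := ℤ) t 1
  simp only [one_pow, mul_one] at h
  have h0 : ((1:ℤ)-1)^(2*t) = 0 := by
    rw [sub_self]; exact zero_pow (by omega)
  rw [h0, sub_zero] at h
  have h2 : ((1:ℤ)+1)^(2*t) = 2 * 2^(2*t-1) := by
    norm_num
    rw [← pow_succ']
    congr 1; omega
  rw [h2] at h
  exact (mul_left_cancel₀ (by norm_num : (2:ℤ) ≠ 0) h).symm

/-- L7': key coefficient identity -/
lemma seven (t m : ℕ) (hm : m < 2*t) :
    2 * ∑ i ∈ range t, (Nat.choose (2*t) (2*i+1) : ℤ) * (Nat.choose (2*i+1) m : ℤ)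
      = 2^(2*t-m) * (Nat.choose (2*t) m : ℤ) := by
  have hP := odd_expand (R := Polynomial ℤ) t (X + 1)
  have hL : (X + 1 + 1 : Polynomial ℤ)^(2*t) = (X + C 2)^(2*t) := by
    congr 1; simp [Polynomial.C_eq_natCast]; ring
  have hR : (X + 1 - 1 : Polynomial ℤ)^(2*t) = X^(2*t) := by congr 1; ring
  rw [hL, hR] at hP
  have := congrArg (fun p => Polynomial.coeff p m) hP
  simp only [Polynomial.coeff_sub, Polynomial.coeff_X_add_C_pow, Polynomial.coeff_X_pow] at this
  rw [if_neg (by omega)] at this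
  have h2 : ((2 : Polynomial ℤ) * ∑ i ∈ range t, (Nat.choose (2*t) (2*i+1) : Polynomial ℤ) * (X+1)^(2*i+1)).coeff m
      = 2 * ∑ i ∈ range t, (Nat.choose (2*t) (2*i+1) : ℤ) * (Nat.choose (2*i+1) m : ℤ) := by
    have htwo : (2 : Polynomial ℤ) = C 2 := by norm_num
    rw [htwo, Polynomial.coeff_C_mul, Polynomial.finset_sum_coeff]
    congr 1
    apply Finset.sum_congr rfl
    intro i _
    have hc : ((Nat.choose (2*t) (2*i+1) : Polynomial ℤ)) = C ((Nat.choose (2*t) (2*i+1) : ℤ)) := by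
      simp [Polynomial.C_eq_natCast]
    rw [hc, Polynomial.coeff_C_mul]
    have hone : ((X + 1 : Polynomial ℤ))^(2*i+1) = (X + C 1)^(2*i+1) := by norm_num
    rw [hone, Polynomial.coeff_X_add_C_pow]
    simp
  rw [h2] at this
  rw [← this, sub_zero]


noncomputable def Dnum (t m : ℕ) : ℤ :=
  ∑ i ∈ range t, (Nat.choose (2*t) (2*i+1) : ℤ) * (Nat.choose (2*i) m : ℤ)

lemma Dnum_rec (t m : ℕ) (hm : m + 1 ≤ 2*t - 1) (ht : 1 ≤ t) :
    Dnum t (m+1) = 2^(2*t-m-2) * (Nat.choose (2*t) (m+1) : ℤ) - Dnum t m := by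
  have hsum : Dnum t (m+1) + Dnum t m
      = ∑ i ∈ range t, (Nat.choose (2*t) (2*i+1) : ℤ) * (Nat.choose (2*i+1) (m+1) : ℤ) := by
    unfold Dnum
    rw [← Finset.sum_add_distrib]
    apply Finset.sum_congr rfl
    intro i _
    have : Nat.choose (2*i+1) (m+1) = Nat.choose (2*i) m + Nat.choose (2*i) (m+1) :=
      Nat.choose_succ_succ (2*i) m
    rw [this]
    push_cast
    ring
  have h7 := seven t (m+1) (by omega)
  have h2 : (2:ℤ) * (Dnum t (m+1) + Dnum t m) = 2 * (2^(2*t-m-2) * (Nat.choose (2*t) (m+1) : ℤ)) := by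
    rw [hsum, h7]
    have : 2*t - (m+1) = (2*t - m - 2) + 1 := by omega
    rw [this, pow_succ]
    ring
  have := mul_left_cancel₀ (by norm_num : (2:ℤ) ≠ 0) h2
  linarith

lemma Dnum_zero (t : ℕ) (ht : 1 ≤ t) : Dnum t 0 = 2^(2*t-1) := by
  unfold Dnum
  rw [← sum_odd_choose t ht]
  apply Finset.sum_congr rfl
  intro i _
  simp

lemma Dnum_dvd (t : ℕ) (ht : 1 ≤ t) : ∀ m, m ≤ 2*t - 1 → (2^(2*t-1-m) : ℤ) ∣ Dnum t m := by
  intro m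
  induction m with
  | zero => intro _; rw [Dnum_zero t ht]; simp
  | succ m ih =>
      intro hm
      rw [Dnum_rec t m hm ht]
      apply dvd_sub
      · have : 2*t - 1 - (m+1) = 2*t - m - 2 := by omega
        rw [this]; exact Dvd.intro _ rfl
      · have hd := ih (by omega)
        have : (2:ℤ)^(2*t-1-(m+1)) ∣ 2^(2*t-1-m) := pow_dvd_pow 2 (by omega)
        exact this.trans hd

noncomputable def Ecoef (t j : ℕ) : ℤ := Dnum t (2*j+1) / 2^(2*t-2*j-2)

lemma Ecoef_spec (t j : ℕ) (hj : j + 1 < t) :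
    Dnum t (2*j+1) = 2^(2*t-2*j-2) * Ecoef t j := by
  have hd := Dnum_dvd t (by omega) (2*j+1) (by omega)
  have : 2*t-1-(2*j+1) = 2*t-2*j-2 := by omega
  rw [this] at hd
  rw [Ecoef, Int.mul_ediv_cancel' hd]

lemma Dnum_nonneg (t m : ℕ) : 0 ≤ Dnum t m := by
  apply Finset.sum_nonneg
  intro i _
  positivity

lemma Ecoef_nonneg (t j : ℕ) : 0 ≤ Ecoef t j :=
  Int.ediv_nonneg (Dnum_nonneg t (2*j+1)) (by positivity)

lemma Dnum_top (t : ℕ) (ht : 2 ≤ t) : Dnum t (2*t-3) = 4*t*(t-1) := by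
  unfold Dnum
  rw [Finset.sum_eq_single (t-1)]
  · have h1 : 2*(t-1)+1 = 2*t-1 := by omega
    have h2 : Nat.choose (2*t) (2*t-1) = 2*t := by
      have := Nat.choose_symm (n := 2*t) (k := 2*t-1) (by omega)
      have he : 2*t - (2*t-1) = 1 := by omega
      rw [he] at this
      rw [← this, Nat.choose_one_right]
    have h3 : Nat.choose (2*(t-1)) (2*t-3) = 2*t-2 := by
      have he : 2*(t-1) = 2*t-2 := by omega
      rw [he]
      have := Nat.choose_symm (n := 2*t-2) (k := 2*t-3) (by omega)
      have he2 : 2*t-2 - (2*t-3) = 1 := by omega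
      rw [he2] at this
      rw [← this, Nat.choose_one_right]
    have hc : ((2*t-2 : ℕ) : ℤ) = 2*(t:ℤ) - 2 := by omega
    rw [h1, h2, h3, hc]
    push_cast
    ring
  · intro i hi hne
    rw [Finset.mem_range] at hi
    have : Nat.choose (2*i) (2*t-3) = 0 := Nat.choose_eq_zero_of_lt (by omega)
    rw [this]
    simp
  · intro h
    exfalso
    rw [Finset.mem_range] at h
    omega

lemma Ecoef_top (t : ℕ) (ht : 2 ≤ t) : Ecoef t (t-2) = t*(t-1) := by
  have h1 : 2*(t-2)+1 = 2*t-3 := by omega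
  have h2 : 2*t-2*(t-2)-2 = 2 := by omega
  rw [Ecoef, h1, h2, Dnum_top t ht]
  have : (4:ℤ)*t*(t-1) = 2^2 * (t*(t-1)) := by ring
  rw [this, Int.mul_ediv_cancel_left _ (by norm_num)]


noncomputable def fpoly : ℕ → Polynomial ℤ
  | 0 => 1
  | (t+1) => Polynomial.X * (1 + (Polynomial.X - 1) *
      ∑ j ∈ (Finset.range t).attach,
        Polynomial.C (Ecoef (t+1) j.1) * (fpoly j.1).comp (Polynomial.X - 1))
  decreasing_by
    have := j.2; rw [Finset.mem_range] at this; omega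

lemma fpoly_succ (t : ℕ) : fpoly (t+1) = Polynomial.X * (1 + (Polynomial.X - 1) *
      ∑ j ∈ Finset.range t,
        Polynomial.C (Ecoef (t+1) j) * (fpoly j).comp (Polynomial.X - 1)) := by
  rw [fpoly]
  congr 3
  exact Finset.sum_attach (Finset.range t)
    (fun j => Polynomial.C (Ecoef (t+1) j) * (fpoly j).comp (Polynomial.X - 1))

lemma fpoly_zero : fpoly 0 = 1 := by rw [fpoly]

noncomputable def gpoly (t : ℕ) : Polynomial ℤ :=
  1 + Polynomial.X * ∑ i ∈ Finset.range t,
    Polynomial.C ((Nat.choose (2*t) (2*i+1) : ℤ) * 2^(2*i+1)) * fpoly i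

lemma comp_ndeg (p : Polynomial ℤ) : (p.comp (Polynomial.X - 1)).natDegree = p.natDegree := by
  have h1 : (Polynomial.X - 1 : Polynomial ℤ) = Polynomial.X - Polynomial.C 1 := by norm_num
  rw [Polynomial.natDegree_comp, h1, Polynomial.natDegree_X_sub_C, mul_one]

lemma comp_lead (p : Polynomial ℤ) : (p.comp (Polynomial.X - 1)).leadingCoeff = p.leadingCoeff := by
  have h1 : (Polynomial.X - 1 : Polynomial ℤ) = Polynomial.X - Polynomial.C 1 := by norm_num
  rw [h1, Polynomial.leadingCoeff_comp (by rw [Polynomial.natDegree_X_sub_C]; norm_num)]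
  have : (Polynomial.X - Polynomial.C (1:ℤ)).leadingCoeff = 1 := (Polynomial.monic_X_sub_C 1)
  rw [this, one_pow, mul_one]

lemma fpoly_deg : ∀ t, (fpoly t).degree = (t : ℕ) ∧ 0 < (fpoly t).leadingCoeff := by
  intro t
  induction t using Nat.strong_induction_on with
  | _ t ih =>
    match t with
    | 0 => rw [fpoly_zero]; exact ⟨Polynomial.degree_one, by rw [Polynomial.leadingCoeff_one]; norm_num⟩
    | 1 =>
        rw [fpoly_succ]
        simp only [Finset.range_zero, Finset.sum_empty, mul_zero, add_zero, mul_one]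
        exact ⟨Polynomial.degree_X, by rw [Polynomial.leadingCoeff_X]; norm_num⟩
    | (t+2) =>
        rw [fpoly_succ]
        have hfd := (ih t (by omega)).1
        have hfl := (ih t (by omega)).2
        have hfne : fpoly t ≠ 0 := fun h => by
          rw [h, Polynomial.leadingCoeff_zero] at hfl; exact lt_irrefl 0 hfl
        have hE : Ecoef (t+2) t = ((t:ℤ)+2)*((t:ℤ)+1) := by
          have h0 := Ecoef_top (t+2) (by omega)
          have h2 : (t+2) - 2 = t := by omega
          rw [h2] at h0
          rw [h0]; push_cast; ring
        have hEpos : (0:ℤ) < Ecoef (t+2) t := by rw [hE]; positivity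
        -- the top term of the sum
        set TT : Polynomial ℤ := Polynomial.C (Ecoef (t+2) t) * (fpoly t).comp (Polynomial.X - 1)
          with hTT
        have hcompd : ((fpoly t).comp (Polynomial.X - 1)).degree = (t : ℕ) := by
          have hne : (fpoly t).comp (Polynomial.X - 1) ≠ 0 := by
            intro h
            have := comp_lead (fpoly t)
            rw [h, Polynomial.leadingCoeff_zero] at this
            rw [← this] at hfl; exact lt_irrefl 0 hfl
          rw [Polynomial.degree_eq_natDegree hne, comp_ndeg]
          rw [Polynomial.degree_eq_natDegree hfne] at hfd
          exact_mod_cast hfd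
        have htopd : TT.degree = (t : ℕ) := by
          rw [hTT, Polynomial.degree_mul, Polynomial.degree_C (ne_of_gt hEpos), hcompd, zero_add]
        have htopl : 0 < TT.leadingCoeff := by
          rw [hTT, Polynomial.leadingCoeff_mul, Polynomial.leadingCoeff_C, comp_lead]
          exact mul_pos hEpos hfl
        have hrestd : (∑ j ∈ Finset.range t,
            Polynomial.C (Ecoef (t+2) j) * (fpoly j).comp (Polynomial.X - 1)).degree
            < ((t:ℕ) : WithBot ℕ) := by
          apply lt_of_le_of_lt (Polynomial.degree_sum_le _ _)
          rw [Finset.sup_lt_iff (by exact_mod_cast WithBot.bot_lt_coe (t:ℕ))]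
          intro j hj
          rw [Finset.mem_range] at hj
          have hdj : ((fpoly j).comp (Polynomial.X - 1)).degree ≤ (j : ℕ) := by
            by_cases hz : (fpoly j).comp (Polynomial.X - 1) = 0
            · rw [hz, Polynomial.degree_zero]; exact bot_le
            · rw [Polynomial.degree_eq_natDegree hz, comp_ndeg]
              have := (ih j (by omega)).1
              have hjne : fpoly j ≠ 0 := fun h => by
                have hl := (ih j (by omega)).2
                rw [h, Polynomial.leadingCoeff_zero] at hl; exact lt_irrefl 0 hl
              rw [Polynomial.degree_eq_natDegree hjne] at this
              exact_mod_cast le_of_eq this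
          calc (Polynomial.C (Ecoef (t+2) j) * (fpoly j).comp (Polynomial.X - 1)).degree
              ≤ (Polynomial.C (Ecoef (t+2) j)).degree + ((fpoly j).comp (Polynomial.X - 1)).degree :=
                Polynomial.degree_mul_le _ _
            _ ≤ 0 + (j : ℕ) := add_le_add Polynomial.degree_C_le hdj
            _ = ((j : ℕ) : WithBot ℕ) := zero_add _
            _ < ((t : ℕ) : WithBot ℕ) := by exact_mod_cast hj
        -- S = rest + TT
        have hSsplit : (∑ j ∈ Finset.range (t+1),
            Polynomial.C (Ecoef (t+2) j) * (fpoly j).comp (Polynomial.X - 1))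
            = (∑ j ∈ Finset.range t,
              Polynomial.C (Ecoef (t+2) j) * (fpoly j).comp (Polynomial.X - 1)) + TT := by
          rw [Finset.sum_range_succ, hTT]
        set S : Polynomial ℤ := ∑ j ∈ Finset.range (t+1),
          Polynomial.C (Ecoef (t+2) j) * (fpoly j).comp (Polynomial.X - 1) with hS
        have hSd : S.degree = (t : ℕ) := by
          rw [hSsplit, Polynomial.degree_add_eq_right_of_degree_lt (by rw [htopd]; exact hrestd),
            htopd]
        have hSl : 0 < S.leadingCoeff := by
          rw [hSsplit, Polynomial.leadingCoeff_add_of_degree_lt (by rw [htopd]; exact hrestd)]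
          exact htopl
        -- B = 1 + (X-1)*S
        have hXSd : ((Polynomial.X - 1 : Polynomial ℤ) * S).degree = ((t+1 : ℕ) : WithBot ℕ) := by
          rw [Polynomial.degree_mul, hSd]
          have : (Polynomial.X - 1 : Polynomial ℤ).degree = 1 := by
            have h1 : (Polynomial.X - 1 : Polynomial ℤ) = Polynomial.X - Polynomial.C 1 := by norm_num
            rw [h1, Polynomial.degree_X_sub_C]
          rw [this]
          rw [show ((t+1 : ℕ) : WithBot ℕ) = ((1+t : ℕ) : WithBot ℕ) by rw [Nat.add_comm]]
          push_cast
          rfl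
        have hXSl : ((Polynomial.X - 1 : Polynomial ℤ) * S).leadingCoeff = S.leadingCoeff := by
          rw [Polynomial.leadingCoeff_mul]
          have : (Polynomial.X - 1 : Polynomial ℤ).leadingCoeff = 1 := by
            have h1 : (Polynomial.X - 1 : Polynomial ℤ) = Polynomial.X - Polynomial.C 1 := by norm_num
            rw [h1]; exact Polynomial.monic_X_sub_C 1
          rw [this, one_mul]
        have hBd : ((1 : Polynomial ℤ) + (Polynomial.X - 1) * S).degree = ((t+1:ℕ) : WithBot ℕ) := by
          rw [Polynomial.degree_add_eq_right_of_degree_lt, hXSd]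
          rw [hXSd, Polynomial.degree_one]
          exact_mod_cast WithBot.coe_lt_coe.mpr (by omega : 0 < t+1)
        have hBl : ((1 : Polynomial ℤ) + (Polynomial.X - 1) * S).leadingCoeff = S.leadingCoeff := by
          rw [Polynomial.leadingCoeff_add_of_degree_lt, hXSl]
          rw [hXSd, Polynomial.degree_one]
          exact_mod_cast WithBot.coe_lt_coe.mpr (by omega : 0 < t+1)
        constructor
        · rw [Polynomial.degree_mul, Polynomial.degree_X, hBd]
          exact_mod_cast (by omega : 1 + (t+1) = t+2)
        · rw [Polynomial.leadingCoeff_mul, Polynomial.leadingCoeff_X, one_mul, hBl]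
          exact hSl


noncomputable def wsum (t N : ℕ) : ℤ :=
  ∑ k ∈ range (N+1), (Nat.choose N k : ℤ) * |(N:ℤ) - 2*k|^(2*t+1)

/-- L1 -/
lemma key (N k : ℕ) :
    ((N:ℤ) - 2*(k+1)) * (Nat.choose N (k+1) : ℤ)
      = (N:ℤ) * ((Nat.choose (N-1) (k+1) : ℤ) - (Nat.choose (N-1) k : ℤ)) := by
  cases N with
  | zero => simp
  | succ M =>
      have hA : ((M:ℤ)+1) * (Nat.choose M k : ℤ) = (Nat.choose (M+1) (k+1) : ℤ) * ((k:ℤ)+1) := by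
        exact_mod_cast congrArg (Nat.cast (R := ℤ)) (Nat.add_one_mul_choose_eq M k)
      have hB : (Nat.choose (M+1) (k+1) : ℤ) = (Nat.choose M k : ℤ) + (Nat.choose M (k+1) : ℤ) := by
        exact_mod_cast congrArg (Nat.cast (R := ℤ)) (Nat.choose_succ_succ M k)
      have hsub : (M+1) - 1 = M := by omega
      rw [hsub]
      push_cast
      linear_combination ((M:ℤ)+1) * hB + 2 * hA

/-- L2: Abel summation -/
lemma abel (N : ℕ) (w : ℕ → ℤ) (K : ℕ) :
    ∑ k ∈ range (K+1), w k * (((N:ℤ) - 2*k) * (Nat.choose N k : ℤ))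
      = (N:ℤ) * (w K * (Nat.choose (N-1) K : ℤ))
        - (N:ℤ) * ∑ k ∈ range K, (w (k+1) - w k) * (Nat.choose (N-1) k : ℤ) := by
  induction K with
  | zero => simp; ring
  | succ K ih =>
      rw [Finset.sum_range_succ, ih, Finset.sum_range_succ]
      have hk := key N K
      push_cast at hk ⊢
      linear_combination w (K+1) * hk

/-- C1: symmetry halving -/
lemma half (t N : ℕ) (hN : 1 ≤ N) :
    wsum t N = 2 * ∑ k ∈ range ((N-1)/2 + 1),
      ((N:ℤ) - 2*k)^(2*t+1) * (Nat.choose N k : ℤ) := by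
  set K := (N-1)/2 with hK
  set f : ℕ → ℤ := fun k => (Nat.choose N k : ℤ) * |(N:ℤ) - 2*k|^(2*t+1) with hf
  have h1 : wsum t N = ∑ k ∈ range (K+1), f k + ∑ x ∈ range (N-K), f (K+1+x) := by
    rw [wsum]
    have hNK : N + 1 = (K+1) + (N-K) := by omega
    rw [show (range (N+1)) = range ((K+1) + (N-K)) by rw [← hNK]]
    exact Finset.sum_range_add f (K+1) (N-K)
  have h2 : ∑ x ∈ range (N-K), f (K+1+x) = ∑ x ∈ range (N-K), f (N - x) := by
    rw [← Finset.sum_range_reflect (fun x => f (K+1+x)) (N-K)]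
    apply Finset.sum_congr rfl
    intro j hj
    rw [Finset.mem_range] at hj
    congr 1
    omega
  have h3 : ∀ x ∈ range (N-K), f (N - x) = f x := by
    intro x hx
    rw [Finset.mem_range] at hx
    have hxN : x ≤ N := by omega
    rw [hf]
    simp only []
    rw [Nat.choose_symm hxN]
    congr 1
    have hc : ((N - x : ℕ) : ℤ) = (N:ℤ) - x := by omega
    rw [hc]
    have : (N:ℤ) - 2*((N:ℤ) - x) = -((N:ℤ) - 2*x) := by ring
    rw [this, abs_neg]
  rw [Finset.sum_congr rfl h3] at h2
  -- now show ∑_{x<N-K} f x = ∑_{x<K+1} f x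
  have h4 : ∑ x ∈ range (N-K), f x = ∑ x ∈ range (K+1), f x := by
    rcases Nat.even_or_odd N with he | ho
    · -- even: N-K = K+2, extra term zero
      have hNK2 : N - K = (K+1) + 1 := by
        rcases he with ⟨m, hm⟩; omega
      rw [hNK2, Finset.sum_range_succ]
      have hzero : f (K+1) = 0 := by
        rw [hf]
        simp only []
        have hz : (N:ℤ) - 2*((K+1:ℕ):ℤ) = 0 := by
          rcases he with ⟨m, hm⟩
          omega
        rw [hz, abs_zero, zero_pow (by omega : 2*t+1 ≠ 0), mul_zero]
      rw [hzero, add_zero]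
    · have hNK2 : N - K = K + 1 := by rcases ho with ⟨m, hm⟩; omega
      rw [hNK2]
  rw [h4] at h2
  rw [h1, h2, two_mul]
  congr 1 <;>
  · apply Finset.sum_congr rfl
    intro k hk
    rw [Finset.mem_range] at hk
    rw [hf]
    simp only []
    have habs : |(N:ℤ) - 2*k| = (N:ℤ) - 2*k := by
      apply abs_of_nonneg
      omega
    rw [habs]
    ring

/-- base case t = 0 -/
lemma baseW (N : ℕ) (hN : 1 ≤ N) :
    wsum 0 N = 2 * (N:ℤ) * (Nat.choose (N-1) ((N-1)/2) : ℤ) := by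
  rw [half 0 N hN]
  have h1 : ∑ k ∈ range ((N-1)/2 + 1), ((N:ℤ) - 2*k)^(2*0+1) * (Nat.choose N k : ℤ)
      = ∑ k ∈ range ((N-1)/2 + 1), (fun _ => (1:ℤ)) k * (((N:ℤ) - 2*k) * (Nat.choose N k : ℤ)) := by
    apply Finset.sum_congr rfl
    intro k _
    ring
  rw [h1, abel N (fun _ => (1:ℤ)) ((N-1)/2)]
  simp
  ring


/-- common sub-lemma : rewrite the abel residual sum -/
lemma residAbel (t N : ℕ) (w : ℕ → ℤ)
    (hw : ∀ k, w k = ((N:ℤ) - 2*k)^(2*t)) (K : ℕ) :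
    ∑ k ∈ range K, (w (k+1) - w k) * (Nat.choose (N-1) k : ℤ)
      = ∑ i ∈ range t, (Nat.choose (2*t) (2*i+1) : ℤ) *
          (-2 * ∑ k ∈ range K, (((N:ℤ)-1) - 2*k)^(2*i+1) * (Nat.choose (N-1) k : ℤ)) := by
  have h5 : ∀ k : ℕ, w (k+1) - w k
      = -(2 * ∑ i ∈ range t, (Nat.choose (2*t) (2*i+1) : ℤ) * (((N:ℤ)-1) - 2*k)^(2*i+1)) := by
    intro k
    have hz := odd_expand (R := ℤ) t (((N:ℤ)-1) - 2*k)
    have e1 : (((N:ℤ)-1) - 2*k) + 1 = (N:ℤ) - 2*k := by ring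
    have e2 : (((N:ℤ)-1) - 2*k) - 1 = (N:ℤ) - 2*(k+1) := by push_cast; ring
    rw [e1, e2] at hz
    rw [hw k, hw (k+1)]
    push_cast at hz ⊢
    linarith [hz]
  calc ∑ k ∈ range K, (w (k+1) - w k) * (Nat.choose (N-1) k : ℤ)
      = ∑ k ∈ range K, ∑ i ∈ range t,
          (-2) * ((Nat.choose (2*t) (2*i+1) : ℤ) * (((N:ℤ)-1) - 2*k)^(2*i+1)
            * (Nat.choose (N-1) k : ℤ)) := by
        apply Finset.sum_congr rfl
        intro k _
        rw [h5 k, neg_mul, Finset.mul_sum, Finset.sum_mul, ← Finset.sum_neg_distrib]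
        apply Finset.sum_congr rfl
        intro i _
        ring
    _ = ∑ i ∈ range t, ∑ k ∈ range K,
          (-2) * ((Nat.choose (2*t) (2*i+1) : ℤ) * (((N:ℤ)-1) - 2*k)^(2*i+1)
            * (Nat.choose (N-1) k : ℤ)) := Finset.sum_comm
    _ = ∑ i ∈ range t, (Nat.choose (2*t) (2*i+1) : ℤ) *
          (-2 * ∑ k ∈ range K, (((N:ℤ)-1) - 2*k)^(2*i+1) * (Nat.choose (N-1) k : ℤ)) := by
        apply Finset.sum_congr rfl
        intro i _
        rw [Finset.mul_sum, Finset.mul_sum]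
        apply Finset.sum_congr rfl
        intro k _
        ring

/-- Step O -/
lemma stepO (t n : ℕ) (ht : 1 ≤ t) (hn : 1 ≤ n) :
    wsum t (2*n+1) = 2*(2*(n:ℤ)+1)*(Nat.choose (2*n) n : ℤ)
      + 2*(2*(n:ℤ)+1) * ∑ i ∈ range t, (Nat.choose (2*t) (2*i+1) : ℤ) * wsum i (2*n) := by
  set w : ℕ → ℤ := fun k => (((2*n+1 : ℕ):ℤ) - 2*k)^(2*t) with hwdef
  have hw : ∀ k, w k = (((2*n+1 : ℕ):ℤ) - 2*k)^(2*t) := fun k => rfl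
  have h1 := half t (2*n+1) (by omega)
  rw [show (2*n+1-1)/2 = n by omega] at h1
  have h2 : ∑ k ∈ range (n+1), (((2*n+1 : ℕ):ℤ) - 2*k)^(2*t+1) * (Nat.choose (2*n+1) k : ℤ)
      = ∑ k ∈ range (n+1), w k * ((((2*n+1 : ℕ):ℤ) - 2*k) * (Nat.choose (2*n+1) k : ℤ)) := by
    apply Finset.sum_congr rfl
    intro k _
    rw [hw k, pow_succ]
    ring
  have h3 := abel (2*n+1) w n
  rw [show (2*n+1-1) = 2*n by omega] at h3
  have h4 : w n = 1 := by
    rw [hw n]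
    have : ((2*n+1 : ℕ):ℤ) - 2*n = 1 := by push_cast; ring
    rw [this, one_pow]
  have hres := residAbel t (2*n+1) w (by intro k; rw [hw k]) n
  have h7 : ∀ i ∈ range t,
      (Nat.choose (2*t) (2*i+1) : ℤ) *
        (-2 * ∑ k ∈ range n, (((2*n+1:ℕ):ℤ)-1 - 2*k)^(2*i+1) * (Nat.choose (2*n) k : ℤ))
      = -((Nat.choose (2*t) (2*i+1) : ℤ) * wsum i (2*n)) := by
    intro i _
    have hh := half i (2*n) (by omega)
    rw [show (2*n-1)/2 = n-1 by omega, show n-1+1 = n by omega] at hh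
    have : ∑ k ∈ range n, (((2*n+1:ℕ):ℤ)-1 - 2*k)^(2*i+1) * (Nat.choose (2*n) k : ℤ)
        = ∑ k ∈ range n, (((2*n:ℕ):ℤ) - 2*k)^(2*i+1) * (Nat.choose (2*n) k : ℤ) := by
      apply Finset.sum_congr rfl
      intro k _
      have : ((2*n+1:ℕ):ℤ)-1 = ((2*n:ℕ):ℤ) := by push_cast; ring
      rw [this]
    rw [this]
    linear_combination ((Nat.choose (2*t) (2*i+1) : ℤ)) * hh
  rw [show 2*n+1-1 = 2*n from by omega] at hres
  rw [Finset.sum_congr rfl h7] at hres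
  rw [h1, h2, h3, h4, hres, Finset.sum_neg_distrib]
  push_cast
  ring

/-- Step E -/
lemma stepE (t n : ℕ) (ht : 1 ≤ t) (hn : 1 ≤ n) :
    wsum t (2*n) = 4*(n:ℤ) * ∑ i ∈ range t, (Nat.choose (2*t) (2*i+1) : ℤ) * wsum i (2*n-1) := by
  set w : ℕ → ℤ := fun k => (((2*n : ℕ):ℤ) - 2*k)^(2*t) with hwdef
  have hw : ∀ k, w k = (((2*n : ℕ):ℤ) - 2*k)^(2*t) := fun k => rfl
  have h1 := half t (2*n) (by omega)
  rw [show (2*n-1)/2 = n-1 by omega, show n-1+1 = n by omega] at h1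
  have h2 : ∑ k ∈ range n, (((2*n : ℕ):ℤ) - 2*k)^(2*t+1) * (Nat.choose (2*n) k : ℤ)
      = ∑ k ∈ range ((n-1)+1), w k * ((((2*n : ℕ):ℤ) - 2*k) * (Nat.choose (2*n) k : ℤ)) := by
    rw [show n-1+1 = n by omega]
    apply Finset.sum_congr rfl
    intro k _
    rw [hw k, pow_succ]
    ring
  have h3 := abel (2*n) w (n-1)
  rw [show (2*n-1) = 2*n-1 by rfl] at h3
  have h4 : w (n-1) = 2^(2*t) := by
    rw [hw (n-1)]
    have : ((2*n : ℕ):ℤ) - 2*((n-1:ℕ):ℤ) = 2 := by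
      have : ((n-1:ℕ):ℤ) = (n:ℤ) - 1 := by omega
      rw [this]; push_cast; ring
    rw [this]
  have hres := residAbel t (2*n) w (by intro k; rw [hw k]) (n-1)
  -- relate inner sums to wsum i (2n-1) minus boundary
  have h7 : ∀ i ∈ range t,
      (Nat.choose (2*t) (2*i+1) : ℤ) *
        (-2 * ∑ k ∈ range (n-1), (((2*n:ℕ):ℤ)-1 - 2*k)^(2*i+1) * (Nat.choose (2*n-1) k : ℤ))
      = -((Nat.choose (2*t) (2*i+1) : ℤ) * wsum i (2*n-1))
        + (Nat.choose (2*t) (2*i+1) : ℤ) * (2 * (Nat.choose (2*n-1) (n-1) : ℤ)) := by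
    intro i _
    have hh := half i (2*n-1) (by omega)
    rw [show (2*n-1-1)/2 = n-1 by omega] at hh
    have hsplit : ∑ k ∈ range ((n-1)+1), (((2*n-1:ℕ):ℤ) - 2*k)^(2*i+1) * (Nat.choose (2*n-1) k : ℤ)
        = (∑ k ∈ range (n-1), (((2*n-1:ℕ):ℤ) - 2*k)^(2*i+1) * (Nat.choose (2*n-1) k : ℤ))
          + (((2*n-1:ℕ):ℤ) - 2*((n-1:ℕ):ℤ))^(2*i+1) * (Nat.choose (2*n-1) (n-1) : ℤ) := by
      rw [Finset.sum_range_succ]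
    have hbound : (((2*n-1:ℕ):ℤ) - 2*((n-1:ℕ):ℤ))^(2*i+1) = 1 := by
      have e1 : ((2*n-1:ℕ):ℤ) = 2*(n:ℤ)-1 := by omega
      have e2 : ((n-1:ℕ):ℤ) = (n:ℤ)-1 := by omega
      rw [e1, e2, show (2*(n:ℤ)-1) - 2*((n:ℤ)-1) = 1 by ring, one_pow]
    have hsame : ∑ k ∈ range (n-1), (((2*n:ℕ):ℤ)-1 - 2*k)^(2*i+1) * (Nat.choose (2*n-1) k : ℤ)
        = ∑ k ∈ range (n-1), (((2*n-1:ℕ):ℤ) - 2*k)^(2*i+1) * (Nat.choose (2*n-1) k : ℤ) := by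
      apply Finset.sum_congr rfl
      intro k _
      have : ((2*n:ℕ):ℤ)-1 = ((2*n-1:ℕ):ℤ) := by omega
      rw [this]
    rw [hsame]
    rw [hsplit, hbound] at hh
    linear_combination ((Nat.choose (2*t) (2*i+1) : ℤ)) * hh
  rw [Finset.sum_congr rfl h7] at hres
  rw [Finset.sum_add_distrib, Finset.sum_neg_distrib, ← Finset.sum_mul,
    sum_odd_choose t ht] at hres
  have h4' : w (n-1) = 2 * 2^(2*t-1) := by
    rw [h4, ← pow_succ']
    congr 1
    omega
  rw [h1, h2, h3, h4', hres]
  push_cast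
  ring


lemma alg (s : ℕ) :
    Polynomial.C ((2:ℤ)^(2*(s+1)+1)) * fpoly (s+1)
      = 4 * Polynomial.X * ∑ i ∈ range (s+1),
          Polynomial.C ((Nat.choose (2*(s+1)) (2*i+1) : ℤ)) * (gpoly i).comp (Polynomial.X - 1) := by
  set q : Polynomial ℤ := Polynomial.X - 1 with hq
  set t := s + 1 with hts
  have sum_comp' : ∀ (u : Finset ℕ) (f : ℕ → Polynomial ℤ),
      (∑ i ∈ u, f i).comp q = ∑ i ∈ u, (f i).comp q := by
    intro u f
    simp [Polynomial.comp, Polynomial.eval₂_finset_sum]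
  have gcomp : ∀ i, (gpoly i).comp q
      = 1 + q * ∑ j ∈ range i,
          Polynomial.C ((Nat.choose (2*i) (2*j+1) : ℤ) * 2^(2*j+1)) * (fpoly j).comp q := by
    intro i
    rw [gpoly]
    rw [Polynomial.add_comp, Polynomial.one_comp, Polynomial.mul_comp, Polynomial.X_comp,
      sum_comp']
    congr 2
    apply Finset.sum_congr rfl
    intro j _
    rw [Polynomial.mul_comp, Polynomial.C_comp]
  have extend : ∀ i ∈ range t,
      ∑ j ∈ range i, Polynomial.C ((Nat.choose (2*i) (2*j+1) : ℤ) * 2^(2*j+1)) * (fpoly j).comp q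
      = ∑ j ∈ range s, Polynomial.C ((Nat.choose (2*i) (2*j+1) : ℤ) * 2^(2*j+1)) * (fpoly j).comp q := by
    intro i hi
    rw [Finset.mem_range] at hi
    apply Finset.sum_subset
    · exact Finset.range_subset_range.mpr (by omega)
    · intro j _ hj
      rw [Finset.mem_range] at hj
      push_neg at hj
      have : Nat.choose (2*i) (2*j+1) = 0 := Nat.choose_eq_zero_of_lt (by omega)
      rw [this]
      simp
  -- rewrite the RHS sum
  have main : ∑ i ∈ range t,
      Polynomial.C ((Nat.choose (2*t) (2*i+1) : ℤ)) * (gpoly i).comp q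
      = Polynomial.C ((2:ℤ)^(2*t-1))
        + q * ∑ j ∈ range s, Polynomial.C (Dnum t (2*j+1) * 2^(2*j+1)) * (fpoly j).comp q := by
    have step1 : ∀ i ∈ range t,
        Polynomial.C ((Nat.choose (2*t) (2*i+1) : ℤ)) * (gpoly i).comp q
        = Polynomial.C ((Nat.choose (2*t) (2*i+1) : ℤ))
          + q * ∑ j ∈ range s,
              Polynomial.C ((Nat.choose (2*t) (2*i+1) : ℤ) * ((Nat.choose (2*i) (2*j+1) : ℤ) * 2^(2*j+1)))
                * (fpoly j).comp q := by
      intro i hi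
      rw [gcomp i, extend i hi, mul_add, mul_one]
      congr 1
      simp only [Finset.mul_sum]
      apply Finset.sum_congr rfl
      intro j _
      simp only [Polynomial.C_mul]
      ring
    rw [Finset.sum_congr rfl step1, Finset.sum_add_distrib]
    congr 1
    · rw [← map_sum Polynomial.C, sum_odd_choose t (by omega)]
    · rw [← Finset.mul_sum]
      congr 1
      rw [Finset.sum_comm]
      apply Finset.sum_congr rfl
      intro j _
      rw [← Finset.sum_mul, ← map_sum Polynomial.C]
      congr 2
      rw [Dnum, Finset.sum_mul]
      apply Finset.sum_congr rfl
      intro i _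
      ring
  rw [main]
  -- replace Dnum by Ecoef
  have step2 : ∀ j ∈ range s,
      Polynomial.C (Dnum t (2*j+1) * 2^(2*j+1)) * (fpoly j).comp q
      = Polynomial.C ((2:ℤ)^(2*t-1)) * (Polynomial.C (Ecoef t j) * (fpoly j).comp q) := by
    intro j hj
    rw [Finset.mem_range] at hj
    rw [← mul_assoc, ← Polynomial.C_mul]
    congr 1
    congr 1
    rw [Ecoef_spec t j (by omega)]
    have hpw : (2:ℤ)^(2*t-2*j-2) * 2^(2*j+1) = 2^(2*t-1) := by
      rw [← pow_add]; congr 1; omega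
    linear_combination (Ecoef t j) * hpw
  rw [Finset.sum_congr rfl step2, ← Finset.mul_sum]
  rw [fpoly_succ s, ← hts]
  have hC : Polynomial.C ((2:ℤ)^(2*t+1)) = 4 * Polynomial.C ((2:ℤ)^(2*t-1)) := by
    have : (2:ℤ)^(2*t+1) = 4 * 2^(2*t-1) := by
      rw [show (4:ℤ) = 2^2 by norm_num, ← pow_add]
      congr 1
      omega
    rw [this, Polynomial.C_mul]
    norm_num
  rw [hC]
  ring


lemma chdouble (n : ℕ) (hn : 1 ≤ n) :
    (Nat.choose (2*n) n : ℤ) = 2 * (Nat.choose (2*n-1) (n-1) : ℤ) := by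
  obtain ⟨m, rfl⟩ : ∃ m, n = m + 1 := ⟨n-1, by omega⟩
  rw [show 2*(m+1)-1 = 2*m+1 from by omega, show m+1-1 = m from by omega]
  have hP : Nat.choose (2*m+2) (m+1) = Nat.choose (2*m+1) m + Nat.choose (2*m+1) (m+1) :=
    Nat.choose_succ_succ (2*m+1) m
  have hS : Nat.choose (2*m+1) m = Nat.choose (2*m+1) (m+1) := by
    have := Nat.choose_symm (n := 2*m+1) (k := m+1) (by omega)
    rw [show 2*m+1 - (m+1) = m from by omega] at this
    exact this
  rw [show 2*(m+1) = 2*m+2 from by omega, hP, hS]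
  push_cast
  ring

lemma chmid (n : ℕ) (hn : 1 ≤ n) :
    (n:ℤ) * (Nat.choose (2*n) n : ℤ) = 2*(2*(n:ℤ)-1) * (Nat.choose (2*n-2) (n-1) : ℤ) := by
  obtain ⟨m, rfl⟩ : ∃ m, n = m + 1 := ⟨n-1, by omega⟩
  rw [show 2*(m+1)-2 = 2*m from by omega, show m+1-1 = m from by omega,
    show 2*(m+1) = 2*m+2 from by omega]
  have ha : ((2*m+2 : ℕ):ℤ) * (Nat.choose (2*m+1) m : ℤ)
      = (Nat.choose (2*m+2) (m+1) : ℤ) * ((m:ℤ)+1) := by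
    exact_mod_cast congrArg (Nat.cast (R := ℤ)) (Nat.add_one_mul_choose_eq (2*m+1) m)
  have hb : ((2*m+1 : ℕ):ℤ) * (Nat.choose (2*m) m : ℤ)
      = (Nat.choose (2*m+1) (m+1) : ℤ) * ((m:ℤ)+1) := by
    exact_mod_cast congrArg (Nat.cast (R := ℤ)) (Nat.add_one_mul_choose_eq (2*m) m)
  have hs : (Nat.choose (2*m+1) (m+1) : ℤ) = (Nat.choose (2*m+1) m : ℤ) := by
    have := Nat.choose_symm (n := 2*m+1) (k := m+1) (by omega)
    rw [show 2*m+1 - (m+1) = m from by omega] at this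
    exact_mod_cast congrArg (Nat.cast (R := ℤ)) this.symm
  push_cast at ha hb ⊢
  apply mul_left_cancel₀ (show ((m:ℤ)+1) ≠ 0 from by positivity)
  linear_combination (-((m:ℤ)+1))*ha - 2*((m:ℤ)+1)*hb - (((m:ℤ)+1)*(2*(m:ℤ)+2))*hs

lemma wsum_one (t : ℕ) : wsum t 1 = 2 := by
  rw [wsum]
  rw [Finset.sum_range_succ, Finset.sum_range_succ, Finset.sum_range_zero]
  norm_num

lemma geval (t : ℕ) (x : ℤ) : (gpoly t).eval x
    = 1 + x * ∑ i ∈ range t,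
        ((Nat.choose (2*t) (2*i+1) : ℤ) * 2^(2*i+1)) * (fpoly i).eval x := by
  rw [gpoly]
  simp [Polynomial.eval_finset_sum]

lemma evenodd : ∀ t : ℕ,
    (∀ n : ℕ, 1 ≤ n → wsum t (2*n)
      = 2^(2*t+1) * (fpoly t).eval (n:ℤ) * ((n:ℤ) * (Nat.choose (2*n) n : ℤ)))
    ∧ (∀ n : ℕ, wsum t (2*n+1)
      = 2 * (gpoly t).eval (n:ℤ) * ((2*(n:ℤ)+1) * (Nat.choose (2*n) n : ℤ))) := by
  intro t
  induction t using Nat.strong_induction_on with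
  | _ t ih =>
  constructor
  · -- even case
    intro n hn
    match t with
    | 0 =>
        rw [baseW (2*n) (by omega), show (2*n-1)/2 = n-1 from by omega, fpoly_zero]
        rw [chdouble n hn]
        simp only [Polynomial.eval_one]
        push_cast
        ring
    | (s+1) =>
        have hstep := stepE (s+1) n (by omega) hn
        rw [show 2*n-1 = 2*(n-1)+1 from by omega] at hstep
        have hcast : ((n-1 : ℕ):ℤ) = (n:ℤ) - 1 := by omega
        have halg : (2:ℤ)^(2*(s+1)+1) * (fpoly (s+1)).eval (n:ℤ)
            = 4 * (n:ℤ) * ∑ i ∈ range (s+1),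
                (Nat.choose (2*(s+1)) (2*i+1) : ℤ) * (gpoly i).eval ((n:ℤ) - 1) := by
          have h := congrArg (Polynomial.eval (n:ℤ)) (alg s)
          simp only [Polynomial.eval_mul, Polynomial.eval_C, Polynomial.eval_X,
            Polynomial.eval_finset_sum, Polynomial.eval_comp, Polynomial.eval_sub,
            Polynomial.eval_one, Polynomial.eval_ofNat] at h
          exact h
        have hsum : ∑ i ∈ range (s+1),
            (Nat.choose (2*(s+1)) (2*i+1) : ℤ) * wsum i (2*(n-1)+1)
            = (∑ i ∈ range (s+1),
                (Nat.choose (2*(s+1)) (2*i+1) : ℤ) * (gpoly i).eval ((n:ℤ) - 1))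
              * ((n:ℤ) * (Nat.choose (2*n) n : ℤ)) := by
          rw [Finset.sum_mul]
          apply Finset.sum_congr rfl
          intro i hi
          rw [Finset.mem_range] at hi
          have hodd := (ih i (by omega)).2 (n-1)
          rw [hcast] at hodd
          rw [hodd, show 2*(n-1) = 2*n-2 from by omega]
          linear_combination (-((Nat.choose (2*(s+1)) (2*i+1) : ℤ)
            * (gpoly i).eval ((n:ℤ) - 1))) * chmid n hn
        rw [hstep, hsum]
        linear_combination (-((n:ℤ) * (Nat.choose (2*n) n : ℤ))) * halg
  · -- odd case
    intro n
    match t with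
    | 0 =>
        rw [baseW (2*n+1) (by omega), show (2*n+1-1)/2 = n from by omega,
          show 2*n+1-1 = 2*n from by omega]
        rw [show gpoly 0 = 1 from by rw [gpoly]; simp]
        simp only [Polynomial.eval_one]
        push_cast
        ring
    | (s+1) =>
        match n with
        | 0 =>
            rw [wsum_one, geval]
            norm_num
        | (m+1) =>
            set n := m + 1 with hn
            have hstep := stepO (s+1) n (by omega) (by omega)
            have hsum : ∑ i ∈ range (s+1),
                (Nat.choose (2*(s+1)) (2*i+1) : ℤ) * wsum i (2*n)
                = (∑ i ∈ range (s+1),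
                    ((Nat.choose (2*(s+1)) (2*i+1) : ℤ) * 2^(2*i+1)) * (fpoly i).eval (n:ℤ))
                  * ((n:ℤ) * (Nat.choose (2*n) n : ℤ)) := by
              rw [Finset.sum_mul]
              apply Finset.sum_congr rfl
              intro i hi
              rw [Finset.mem_range] at hi
              have heven := (ih i (by omega)).1 n (by omega)
              rw [heven]
              ring
            rw [hstep, hsum, geval]
            ring

theorem stmt_11 (r : ℕ) :
    ∃ P : Polynomial ℤ, P.degree = r ∧
      ∀ n : ℕ, 0 < n →
        ∑ k ∈ Finset.range (2 * n + 1),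
            (Nat.choose (2 * n) k : ℤ) * |(n : ℤ) - k| ^ (2 * r + 1) =
          P.eval (n : ℤ) * n * Nat.choose (2 * n) n := by
  refine ⟨fpoly r, ?_, ?_⟩
  · exact (fpoly_deg r).1
  · intro n hn
    have heven := (evenodd r).1 n hn
    have hw : wsum r (2*n) = 2^(2*r+1) * ∑ k ∈ Finset.range (2*n+1),
        (Nat.choose (2*n) k : ℤ) * |(n : ℤ) - k| ^ (2*r+1) := by
      rw [wsum, Finset.mul_sum]
      apply Finset.sum_congr rfl
      intro k _
      have h2 : ((2*n : ℕ):ℤ) - 2*k = 2*((n:ℤ) - k) := by push_cast; ring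
      rw [h2, abs_mul, mul_pow]
      norm_num
      ring
    rw [hw] at heven
    have := mul_left_cancel₀ (show ((2:ℤ)^(2*r+1)) ≠ 0 from by positivity)
      (by linear_combination heven :
        (2:ℤ)^(2*r+1) * ∑ k ∈ Finset.range (2*n+1),
          (Nat.choose (2*n) k : ℤ) * |(n : ℤ) - k| ^ (2*r+1)
        = 2^(2*r+1) * ((fpoly r).eval (n:ℤ) * ((n:ℤ) * (Nat.choose (2*n) n : ℤ))))
    rw [this]
    ring
end
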